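/- Let m ∈ ℕ, M ≥ 0, T > 0, and f(t) = M·t^{m+1}/(m+1)!. With divided differences g_{i,k} and coefficients c_{i,j} as in the recursion c_{i,j} = ((j−1)c_{i,j−1} + i·c_{i−1,j−1})/j (c_{0,0}=1, zero otherwise on boundary), equality |f^{(i)}(kT) − Σ_{j=i}^{m} T^{j−i}c_{i,j}g_{j+1,k+1}| = c_{i,m+1}·M·T^{m+1−i} holds for all k ≥ m and i = 1,…,m. -/

import Mathlib

/-- Output coefficients of the implicit robust exact differentiator. -/
noncomputable def ired_c : ℕ → ℕ → ℝ
  | 0, 0 => 1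
  | 0, _ + 1 => 0
  | _ + 1, 0 => 0
  | i + 1, j + 1 => ((j : ℝ) * ired_c (i + 1) j + ((i : ℝ) + 1) * ired_c i j) / ((j : ℝ) + 1)

namespace IredAux

noncomputable def D (h : ℤ → ℝ) : ℤ → ℝ := fun k => h k - h (k - 1)

noncomputable def pp (n : ℕ) : ℤ → ℝ := fun k => ((k : ℝ)) ^ n

lemma D_iter_sum {α : Type*} (s : Finset α) (c : α → ℝ) (h : α → ℤ → ℝ) (j : ℕ) :
    D^[j] (fun k => ∑ a ∈ s, c a * h a k) = fun k => ∑ a ∈ s, c a * D^[j] (h a) k := by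
  induction j generalizing h with
  | zero => simp
  | succ j ih =>
    rw [Function.iterate_succ_apply]
    have h1 : D (fun k => ∑ a ∈ s, c a * h a k) = fun k => ∑ a ∈ s, c a * D (h a) k := by
      funext k
      simp only [D, ← Finset.sum_sub_distrib, mul_sub]
    rw [h1, ih (fun a => D (h a))]
    funext k
    refine Finset.sum_congr rfl fun a _ => ?_
    rw [← Function.iterate_succ_apply]

lemma D_iter_const_mul (c : ℝ) (h : ℤ → ℝ) (j : ℕ) :
    D^[j] (fun k => c * h k) = fun k => c * D^[j] h k := by
  induction j generalizing h with
  | zero => simp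
  | succ j ih =>
    rw [Function.iterate_succ_apply]
    have h1 : D (fun k => c * h k) = fun k => c * D h k := by
      funext k; simp only [D, mul_sub]
    rw [h1, ih (D h)]
    funext k
    rw [← Function.iterate_succ_apply]

lemma D_iter_add (f g : ℤ → ℝ) (j : ℕ) :
    D^[j] (fun k => f k + g k) = fun k => D^[j] f k + D^[j] g k := by
  induction j generalizing f g with
  | zero => simp
  | succ j ih =>
    rw [Function.iterate_succ_apply]
    have h1 : D (fun k => f k + g k) = fun k => D f k + D g k := by
      funext k; simp only [D]; ring
    rw [h1, ih (D f) (D g)]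
    funext k
    rw [← Function.iterate_succ_apply, ← Function.iterate_succ_apply]

lemma D_iter_shift (h : ℤ → ℝ) (j : ℕ) :
    D^[j] (fun k => h (k - 1)) = fun k => D^[j] h (k - 1) := by
  induction j generalizing h with
  | zero => simp
  | succ j ih =>
    rw [Function.iterate_succ_apply]
    have h1 : D (fun k => h (k - 1)) = fun k => D h (k - 1) := rfl
    rw [h1, ih (D h)]
    funext k
    rw [← Function.iterate_succ_apply]

lemma D_iter_zero (j : ℕ) : D^[j] (fun _ => (0:ℝ)) = fun _ => 0 := by
  induction j with
  | zero => rfl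
  | succ j ih =>
    rw [Function.iterate_succ_apply]
    have h1 : D (fun _ => (0:ℝ)) = fun _ => 0 := by funext k; simp [D]
    rw [h1, ih]

lemma D_mulX (h : ℤ → ℝ) :
    D (fun k => (k:ℝ) * h k) = fun k : ℤ => (k:ℝ) * D h k + h (k - 1) := by
  funext k
  simp only [D]
  push_cast
  ring

lemma D_iter_mulX (j : ℕ) (h : ℤ → ℝ) (x : ℤ) :
    D^[j] (fun k => (k:ℝ) * h k) x
      = (x:ℝ) * D^[j] h x + (j:ℝ) * D^[j-1] h (x - 1) := by
  induction j generalizing h x with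
  | zero => simp
  | succ j ih =>
    rw [Function.iterate_succ_apply, D_mulX,
      D_iter_add (fun k => (k:ℝ) * D h k) (fun k => h (k - 1))]
    simp only []
    rw [ih (D h) x, D_iter_shift]
    rw [← Function.iterate_succ_apply]
    rcases Nat.eq_zero_or_pos j with hj | hj
    · subst hj; simp
    · have : D^[j-1] (D h) = D^[j] h := by
        rw [← Function.iterate_succ_apply, Nat.succ_eq_add_one, Nat.sub_add_cancel hj]
      rw [this]
      push_cast
      ring

lemma D_pp_succ_self (n : ℕ) : ∀ x : ℤ, D^[n+1] (pp n) x = 0 := by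
  induction n with
  | zero =>
    intro x
    simp [pp, D]
  | succ n ih =>
    intro x
    have hX : pp (n+1) = fun k : ℤ => (k:ℝ) * pp n k := by
      funext k; simp [pp, pow_succ]; ring
    rw [hX, D_iter_mulX]
    have h2 : D^[n+2] (pp n) x = 0 := by
      rw [Function.iterate_succ_apply']
      have : D (D^[n+1] (pp n)) x = D^[n+1] (pp n) x - D^[n+1] (pp n) (x-1) := rfl
      rw [this, ih x, ih (x-1)]
      ring
    simp only [Nat.add_sub_cancel]
    rw [h2, ih (x-1)]
    ring

lemma D_pp_of_gt {n j : ℕ} (hnj : n < j) : ∀ x : ℤ, D^[j] (pp n) x = 0 := by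
  intro x
  have hj : j = (j - (n+1)) + (n+1) := by omega
  rw [hj, Function.iterate_add_apply]
  have h1 : D^[n+1] (pp n) = fun _ => (0:ℝ) := funext (D_pp_succ_self n)
  rw [h1, D_iter_zero]

lemma D_pp_self (n : ℕ) : ∀ x : ℤ, D^[n] (pp n) x = (n.factorial : ℝ) := by
  induction n with
  | zero => intro x; simp [pp]
  | succ n ih =>
    intro x
    have hX : pp (n+1) = fun k : ℤ => (k:ℝ) * pp n k := by
      funext k; simp [pp, pow_succ]; ring
    rw [hX, D_iter_mulX]
    simp only [Nat.add_sub_cancel]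
    rw [D_pp_of_gt (Nat.lt_succ_self n) x, ih (x-1)]
    push_cast [Nat.factorial_succ]
    ring

lemma telescope (h : ℤ → ℝ) (N : ℕ) (x : ℤ) :
    ∑ j ∈ Finset.range N, D^[j] h (x - 1) = h x - D^[N] h x := by
  induction N with
  | zero => simp
  | succ N ih =>
    rw [Finset.sum_range_succ, ih]
    have : D^[N+1] h x = D^[N] h x - D^[N] h (x - 1) := by
      rw [Function.iterate_succ_apply']; rfl
    rw [this]
    ring

lemma keyK (B : ℕ) : ∀ n : ℕ, n ≤ B → ∀ x : ℤ,
    ∑ j ∈ Finset.Icc 1 B, (1/(j:ℝ)) * D^[j] (pp n) x = (n:ℝ) * (x:ℝ)^(n-1) := by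
  intro n
  induction n with
  | zero =>
    intro _ x
    rw [Finset.sum_eq_zero]
    · simp
    intro j hj
    rw [Finset.mem_Icc] at hj
    rw [D_pp_of_gt (by omega) x]
    ring
  | succ n ih =>
    intro hB x
    have hX : pp (n+1) = fun k : ℤ => (k:ℝ) * pp n k := by
      funext k; simp [pp, pow_succ]; ring
    have hstep : ∀ j ∈ Finset.Icc 1 B,
        (1/(j:ℝ)) * D^[j] (pp (n+1)) x
          = (x:ℝ) * ((1/(j:ℝ)) * D^[j] (pp n) x) + D^[j-1] (pp n) (x - 1) := by
      intro j hj
      rw [Finset.mem_Icc] at hj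
      rw [hX, D_iter_mulX]
      have hj0 : (j:ℝ) ≠ 0 := Nat.cast_ne_zero.mpr (by omega)
      field_simp
    rw [Finset.sum_congr rfl hstep, Finset.sum_add_distrib, ← Finset.mul_sum,
      ih (by omega) x]
    have hIco : Finset.Icc 1 B = Finset.Ico 1 (B+1) := by
      rw [Finset.Ico_add_one_right_eq_Icc]
    rw [hIco, Finset.sum_Ico_eq_sum_range]
    simp only [Nat.add_sub_cancel, Nat.add_sub_cancel_left]
    rw [telescope (pp n) B x, D_pp_of_gt (show n < B by omega) x]
    have hppx : pp n x = (x:ℝ)^n := rfl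
    rw [hppx]
    rcases Nat.eq_zero_or_pos n with hn | hn
    · subst hn; push_cast; simp
    · have hxp : (x:ℝ) * (x:ℝ)^(n-1) = (x:ℝ)^n := by
        rw [← pow_succ', Nat.sub_add_cancel hn]
      push_cast
      rw [mul_left_comm, hxp]
      ring


lemma c_zero_succ (s : ℕ) : ired_c 0 (s+1) = 0 := rfl

lemma c_succ_zero (i : ℕ) : ired_c (i+1) 0 = 0 := rfl

lemma c_rec (i j : ℕ) : ired_c (i+1) (j+1)
    = ((j : ℝ) * ired_c (i + 1) j + ((i : ℝ) + 1) * ired_c i j) / ((j : ℝ) + 1) := rfl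

lemma c_zero_of_lt : ∀ j i : ℕ, j < i → ired_c i j = 0 := by
  intro j
  induction j with
  | zero => intro i hi; cases i with
    | zero => omega
    | succ i => exact c_succ_zero i
  | succ j ih =>
    intro i hi
    cases i with
    | zero => omega
    | succ i =>
      rw [c_rec, ih (i+1) (by omega), ih i (by omega)]
      simp

lemma c_nonneg : ∀ j i : ℕ, 0 ≤ ired_c i j := by
  intro j
  induction j with
  | zero => intro i; cases i with
    | zero => norm_num [ired_c]
    | succ i => rw [c_succ_zero]
  | succ j ih =>
    intro i
    cases i with
    | zero => rw [c_zero_succ]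
    | succ i =>
      rw [c_rec]
      have h1 := ih (i+1)
      have h2 := ih i
      positivity

lemma c_one : ∀ n : ℕ, ired_c 1 (n+1) = 1/((n:ℝ)+1) := by
  intro n
  induction n with
  | zero => norm_num [c_rec, ired_c]
  | succ n ih =>
    rw [c_rec, ih, c_zero_succ]
    have : ((n:ℝ)+1) ≠ 0 := by positivity
    push_cast
    try field_simp
    norm_num

lemma conv_lemma : ∀ i n : ℕ, ired_c (i+1) n = ∑ b ∈ Finset.Icc 1 n, ired_c i (n-b) / b := by
  intro i
  induction i with
  | zero =>
    intro n
    cases n with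
    | zero => simp [c_succ_zero]
    | succ n =>
      rw [c_one n, Finset.sum_eq_single (n+1)]
      · simp [ired_c]
      · intro b hb hbne
        rw [Finset.mem_Icc] at hb
        have : n + 1 - b = (n - b) + 1 := by omega
        rw [this, c_zero_succ]
        simp
      · intro h
        exact absurd (Finset.mem_Icc.mpr ⟨by omega, le_refl _⟩) h
  | succ i ihconv =>
    intro n
    induction n with
    | zero => simp [c_succ_zero]
    | succ n ihn =>
      have hn1 : ((n:ℝ)+1) ≠ 0 := by positivity
      rw [c_rec, ihn, div_eq_iff hn1, eq_comm, Finset.sum_mul,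
        Finset.sum_Icc_succ_top (by omega : 1 ≤ n+1)]
      have hterm : ired_c (i+1) (n+1-(n+1)) / (↑(n+1)) * ((n:ℝ)+1) = 0 := by
        simp [c_succ_zero]
      -- rewrite each term for b in Icc 1 n
      have hstep : ∀ b ∈ Finset.Icc 1 n,
          ired_c (i+1) (n+1-b) / (b:ℝ) * ((n:ℝ)+1)
            = (n:ℝ) * (ired_c (i+1) (n-b) / b) + ((i:ℝ)+1) * (ired_c i (n-b) / b)
              + (ired_c (i+1) (n+1-b) - ired_c (i+1) (n-b)) := by
        intro b hb
        rw [Finset.mem_Icc] at hb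
        have hb0 : ((b:ℝ)) ≠ 0 := Nat.cast_ne_zero.mpr (by omega)
        have ha : n + 1 - b = (n - b) + 1 := by omega
        have hnb : ((n:ℝ)) - (b:ℝ) = ((n - b : ℕ) : ℝ) := by
          push_cast [Nat.cast_sub (by omega : b ≤ n)]; ring
        have hnb1 : (((n-b : ℕ):ℝ)+1) ≠ 0 := by positivity
        have hrec : (((n - b : ℕ):ℝ) + 1) * ired_c (i+1) (n+1-b)
            = ((n - b : ℕ):ℝ) * ired_c (i+1) (n-b) + ((i:ℝ)+1) * ired_c i (n-b) := by
          rw [ha, c_rec]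
          field_simp
        have key : ired_c (i+1) (n+1-b) * ((n:ℝ)+1)
            = (n:ℝ) * ired_c (i+1) (n-b) + ((i:ℝ)+1) * ired_c i (n-b)
              + (ired_c (i+1) (n+1-b) - ired_c (i+1) (n-b)) * (b:ℝ) := by
          linear_combination hrec + (ired_c (i+1) (n+1-b) - ired_c (i+1) (n-b)) * hnb
        calc ired_c (i+1) (n+1-b) / (b:ℝ) * ((n:ℝ)+1)
            = (ired_c (i+1) (n+1-b) * ((n:ℝ)+1)) / (b:ℝ) := by ring
          _ = ((n:ℝ) * ired_c (i+1) (n-b) + ((i:ℝ)+1) * ired_c i (n-b)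
              + (ired_c (i+1) (n+1-b) - ired_c (i+1) (n-b)) * (b:ℝ)) / (b:ℝ) := by rw [key]
          _ = (n:ℝ) * (ired_c (i+1) (n-b) / b) + ((i:ℝ)+1) * (ired_c i (n-b) / b)
              + (ired_c (i+1) (n+1-b) - ired_c (i+1) (n-b)) := by
            field_simp
            try ring
      rw [Finset.sum_congr rfl hstep, hterm, add_zero, Finset.sum_add_distrib,
        Finset.sum_add_distrib, ← Finset.mul_sum, ← Finset.mul_sum, ← ihconv n]
      -- telescoping
      have htel : ∑ b ∈ Finset.Icc 1 n, (ired_c (i+1) (n+1-b) - ired_c (i+1) (n-b))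
          = ired_c (i+1) n - ired_c (i+1) 0 := by
        rw [show Finset.Icc 1 n = Finset.Ico 1 (n+1) from (Finset.Ico_add_one_right_eq_Icc 1 n).symm,
          Finset.sum_Ico_eq_sum_range]
        have : ∀ t ∈ Finset.range (n+1-1),
            (ired_c (i+1) (n+1-(1+t)) - ired_c (i+1) (n-(1+t)))
              = (ired_c (i+1) (n-t) - ired_c (i+1) (n-(t+1))) := by
          intro t ht
          rw [Finset.mem_range] at ht
          have e1 : n+1-(1+t) = n - t := by omega
          have e2 : n-(1+t) = n-(t+1) := by omega
          rw [e1, e2]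
        rw [Finset.sum_congr rfl this]
        have := Finset.sum_range_sub' (fun t => ired_c (i+1) (n-t)) (n+1-1)
        simp only [Nat.add_sub_cancel] at this ⊢
        rw [this]
        simp
      rw [htel, c_succ_zero]
      push_cast
      ring

lemma c_one' {j : ℕ} (hj : 1 ≤ j) : ired_c 1 j = 1/(j:ℝ) := by
  cases j with
  | zero => omega
  | succ j => rw [c_one j]; push_cast; ring

lemma main_identity (i : ℕ) (hi : 1 ≤ i) : ∀ n B : ℕ, n ≤ B → ∀ x : ℤ,
    ∑ j ∈ Finset.Icc 1 B, ired_c i j * D^[j] (pp n) x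
      = (Nat.descFactorial n i : ℝ) * (x:ℝ)^(n-i) := by
  induction i, hi using Nat.le_induction with
  | base =>
    intro n B hnB x
    have h1 : ∀ j ∈ Finset.Icc 1 B, ired_c 1 j * D^[j] (pp n) x
        = (1/(j:ℝ)) * D^[j] (pp n) x := by
      intro j hj
      rw [Finset.mem_Icc] at hj
      rw [c_one' hj.1]
    rw [Finset.sum_congr rfl h1, keyK B n hnB x, Nat.descFactorial_one]
  | succ i hi ih =>
    intro n B hnB x
    have step1 : ∀ j ∈ Finset.Icc 1 B, ired_c (i+1) j * D^[j] (pp n) x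
        = ∑ b ∈ Finset.Icc 1 B,
            (if b ≤ j then ired_c i (j-b) / b * D^[j] (pp n) x else 0) := by
      intro j hj
      rw [Finset.mem_Icc] at hj
      rw [conv_lemma i j, Finset.sum_mul]
      rw [← Finset.sum_subset (Finset.Icc_subset_Icc_right hj.2)
        (fun b hbB hb => by
          rw [Finset.mem_Icc] at hbB hb
          rw [if_neg (by omega)])]
      refine Finset.sum_congr rfl fun b hb => ?_
      rw [Finset.mem_Icc] at hb
      rw [if_pos hb.2]
    rw [Finset.sum_congr rfl step1, Finset.sum_comm]
    have step2 : ∀ b ∈ Finset.Icc 1 B,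
        (∑ j ∈ Finset.Icc 1 B,
          (if b ≤ j then ired_c i (j-b) / b * D^[j] (pp n) x else 0))
        = (1/(b:ℝ)) * ((Nat.descFactorial n i : ℝ)
            * D^[b] (pp (n-i)) x) := by
      intro b hb
      rw [Finset.mem_Icc] at hb
      have e1 : (∑ j ∈ Finset.Icc 1 B,
          (if b ≤ j then ired_c i (j-b) / b * D^[j] (pp n) x else 0))
          = ∑ j ∈ Finset.Icc b B, ired_c i (j-b) / b * D^[j] (pp n) x := by
        rw [← Finset.sum_subset (Finset.Icc_subset_Icc_left hb.1)
          (fun j hjB hj => by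
            rw [Finset.mem_Icc] at hjB hj
            rw [if_neg (by omega)])]
        refine Finset.sum_congr rfl fun j hj => ?_
        rw [Finset.mem_Icc] at hj
        rw [if_pos hj.1]
      rw [e1, show Finset.Icc b B = Finset.Ico b (B+1) from (Finset.Ico_add_one_right_eq_Icc b B).symm,
        Finset.sum_Ico_eq_sum_range]
      have e2 : ∀ t ∈ Finset.range (B+1-b),
          ired_c i (b+t-b) / b * D^[b+t] (pp n) x
            = ired_c i t / b * D^[b+t] (pp n) x := by
        intro t _
        rw [Nat.add_sub_cancel_left]
      rw [Finset.sum_congr rfl e2,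
        Finset.sum_subset (Finset.range_subset_range.mpr (by omega : B+1-b ≤ B+1))
          (fun t ht htn => by
            rw [Finset.mem_range] at ht htn
            rw [D_pp_of_gt (by omega : n < b + t) x]
            ring)]
      have e3 : ∀ t ∈ Finset.range (B+1),
          ired_c i t / b * D^[b+t] (pp n) x
            = (1/(b:ℝ)) * (ired_c i t * D^[b] (D^[t] (pp n)) x) := by
        intro t _
        rw [Function.iterate_add_apply]
        ring
      rw [Finset.sum_congr rfl e3, ← Finset.mul_sum]
      congr 1
      have e4 : (fun y => ∑ t ∈ Finset.range (B+1), ired_c i t * D^[t] (pp n) y)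
          = fun y => (Nat.descFactorial n i : ℝ) * pp (n-i) y := by
        funext y
        rw [← Finset.sum_subset
          (show Finset.Icc 1 B ⊆ Finset.range (B+1) from fun t ht => by
            rw [Finset.mem_Icc] at ht; rw [Finset.mem_range]; omega)
          (fun t ht htn => by
            rw [Finset.mem_range] at ht
            rw [Finset.mem_Icc] at htn
            have : t = 0 := by omega
            subst this
            rw [c_zero_of_lt 0 i (by omega)]
            ring)]
        rw [ih n B hnB y]
        rfl
      have hsum := congrFun (D_iter_sum (Finset.range (B+1))
        (fun t => ired_c i t) (fun t => D^[t] (pp n)) b) x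
      rw [← hsum, e4, D_iter_const_mul]
    rw [Finset.sum_congr rfl step2]
    have e5 : ∀ b ∈ Finset.Icc 1 B,
        (1/(b:ℝ)) * ((Nat.descFactorial n i : ℝ) * D^[b] (pp (n-i)) x)
          = (Nat.descFactorial n i : ℝ) * ((1/(b:ℝ)) * D^[b] (pp (n-i)) x) := by
      intro b _; ring
    rw [Finset.sum_congr rfl e5, ← Finset.mul_sum, keyK B (n-i) (by omega) x]
    rw [Nat.descFactorial_succ]
    push_cast
    rw [show n - i - 1 = n - (i+1) from Nat.sub_sub n i 1]
    ring

lemma iteratedDeriv_const_pow : ∀ (i : ℕ) (c : ℝ) (n : ℕ),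
    iteratedDeriv i (fun x : ℝ => c * x^n)
      = fun x => c * (Nat.descFactorial n i : ℝ) * x^(n-i) := by
  intro i
  induction i with
  | zero => intro c n; simp
  | succ i ih =>
    intro c n
    have hd : deriv (fun x : ℝ => c * x^n) = fun x => (c * n) * x^(n-1) := by
      funext x
      rw [deriv_const_mul _ ((differentiable_pow n) x), deriv_pow_field]
      ring
    rw [iteratedDeriv_succ', hd, ih (c * n) (n-1)]
    have hdf : n.descFactorial (i+1) = n * (n-1).descFactorial i := by
      cases n with
      | zero => simp
      | succ n => rw [Nat.succ_descFactorial_succ]; simp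
    funext x
    rw [hdf, show n - 1 - i = n - (i+1) by omega]
    push_cast
    ring

end IredAux

theorem stmt12 (m : ℕ) (hm : 1 ≤ m) (M T : ℝ) (hM : 0 ≤ M) (hT : 0 < T)
    (f : ℝ → ℝ) (hf : ∀ t : ℝ, f t = M * t ^ (m + 1) / ((m + 1).factorial : ℝ))
    (g : ℕ → ℤ → ℝ)
    (hg1 : ∀ k : ℤ, g 1 (k + 1) = f ((k : ℝ) * T))
    (hgi : ∀ i : ℕ, 1 ≤ i → i ≤ m + 1 → ∀ k : ℤ,
      g (i + 1) (k + 1) = (g i (k + 1) - g i k) / T) :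
    ∀ k : ℕ, m ≤ k → ∀ i, 1 ≤ i → i ≤ m →
      |iteratedDeriv i f ((k : ℝ) * T)
          - ∑ j ∈ Finset.Icc i m, T ^ (j - i) * ired_c i j * g (j + 1) ((k : ℤ) + 1)|
        = ired_c i (m + 1) * M * T ^ (m + 1 - i) := by
  intro k hk i hi1 him
  have hfact : ((m+1).factorial : ℝ) ≠ 0 := Nat.cast_ne_zero.mpr (Nat.factorial_ne_zero _)
  have hT0 : T ≠ 0 := ne_of_gt hT
  have hfun : f = fun t => (M / ((m+1).factorial : ℝ)) * t^(m+1) := by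
    funext t; rw [hf t]; ring
  -- the divided differences in closed form
  have hg : ∀ j : ℕ, j ≤ m + 1 → ∀ k' : ℤ,
      g (j+1) (k'+1) = (M * T^(m+1) / ((m+1).factorial : ℝ))
        * IredAux.D^[j] (IredAux.pp (m+1)) k' / T^j := by
    intro j
    induction j with
    | zero =>
      intro _ k'
      have : g 1 (k'+1) = f ((k':ℝ) * T) := hg1 k'
      rw [this, hf]
      simp only [Function.iterate_zero, id_eq, IredAux.pp, pow_zero, mul_pow]
      ring
    | succ j ihj =>
      intro hj k'
      rw [hgi (j+1) (by omega) (by omega) k', ihj (by omega) k']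
      have h2 : g (j+1) k' = (M * T^(m+1) / ((m+1).factorial : ℝ))
          * IredAux.D^[j] (IredAux.pp (m+1)) (k'-1) / T^j := by
        have := ihj (by omega) (k'-1)
        rw [show k'-1+1 = k' by ring] at this
        exact this
      rw [h2, Function.iterate_succ_apply']
      have h3 : IredAux.D (IredAux.D^[j] (IredAux.pp (m+1))) k'
          = IredAux.D^[j] (IredAux.pp (m+1)) k' - IredAux.D^[j] (IredAux.pp (m+1)) (k'-1) := rfl
      rw [h3]
      have hTj : (T:ℝ)^j ≠ 0 := pow_ne_zero _ hT0
      field_simp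
      ring
  -- the main discrete identity
  have key := IredAux.main_identity i hi1 (m+1) (m+1) (le_refl _) (k:ℤ)
  have hsplit : ∑ j ∈ Finset.Icc 1 (m+1), ired_c i j * IredAux.D^[j] (IredAux.pp (m+1)) (k:ℤ)
      = (∑ j ∈ Finset.Icc i m, ired_c i j * IredAux.D^[j] (IredAux.pp (m+1)) (k:ℤ))
        + ired_c i (m+1) * ((m+1).factorial : ℝ) := by
    rw [Finset.sum_Icc_succ_top (by omega : 1 ≤ m+1), IredAux.D_pp_self (m+1) (k:ℤ)]
    congr 1
    rw [← Finset.sum_subset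
      (show Finset.Icc i m ⊆ Finset.Icc 1 m from Finset.Icc_subset_Icc_left hi1)
      (fun j hjB hj => by
        rw [Finset.mem_Icc] at hjB hj
        rw [IredAux.c_zero_of_lt j i (by omega)]
        ring)]
  have hS : ∑ j ∈ Finset.Icc i m, ired_c i j * IredAux.D^[j] (IredAux.pp (m+1)) (k:ℤ)
      = ((m+1).descFactorial i : ℝ) * (((k:ℤ)):ℝ)^(m+1-i)
        - ired_c i (m+1) * ((m+1).factorial : ℝ) := by
    rw [← key, hsplit]; ring
  -- rewrite the sum in the goal
  have hterm : ∀ j ∈ Finset.Icc i m, T^(j-i) * ired_c i j * g (j+1) ((k:ℤ)+1)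
      = (M * T^(m+1) / ((m+1).factorial : ℝ) / T^i)
        * (ired_c i j * IredAux.D^[j] (IredAux.pp (m+1)) (k:ℤ)) := by
    intro j hj
    rw [Finset.mem_Icc] at hj
    rw [hg j (by omega) (k:ℤ)]
    have hTj : T^j = T^(j-i) * T^i := by rw [← pow_add]; congr 1; omega
    rw [hTj]
    have h1 : T^(j-i) ≠ 0 := pow_ne_zero _ hT0
    have h2 : T^i ≠ 0 := pow_ne_zero _ hT0
    field_simp
  rw [Finset.sum_congr rfl hterm, ← Finset.mul_sum, hS]
  -- the iterated derivative in closed form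
  have hID : iteratedDeriv i f ((k:ℝ)*T)
      = (M / ((m+1).factorial : ℝ)) * ((m+1).descFactorial i : ℝ) * ((k:ℝ)*T)^(m+1-i) := by
    rw [hfun, IredAux.iteratedDeriv_const_pow]
  rw [hID]
  have hval : (M / ((m+1).factorial : ℝ)) * ((m+1).descFactorial i : ℝ) * ((k:ℝ)*T)^(m+1-i)
      - (M * T^(m+1) / ((m+1).factorial : ℝ) / T^i)
        * (((m+1).descFactorial i : ℝ) * (((k:ℤ)):ℝ)^(m+1-i)
            - ired_c i (m+1) * ((m+1).factorial : ℝ))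
      = ired_c i (m+1) * M * T^(m+1-i) := by
    have hTsplit : T^(m+1) = T^(m+1-i) * T^i := by rw [← pow_add]; congr 1; omega
    have hkk : (((k:ℤ)):ℝ) = (k:ℝ) := by push_cast; rfl
    rw [hTsplit, hkk, mul_pow]
    have h2 : T^i ≠ 0 := pow_ne_zero _ hT0
    field_simp
    ring
  rw [hval, abs_of_nonneg]
  exact mul_nonneg (mul_nonneg (IredAux.c_nonneg _ _) hM) (pow_nonneg hT.le _)
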